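/- arXiv:2501.01858 — 2 statements merged into one kernel-verified Lean document; each statement's English description precedes it below -/
import Mathlib

section
/- Let zeta in C^d satisfy zeta · zeta = 0, let omega in C^d, let A be a symmetric k-tensor on C^d, let I_2 denote the identity 2-tensor with components delta_{jk}, and let n >= 1 and 0 <= j < n. Then the full contraction (A ⊗ I_2^n) · (zeta^{k+2n-j} ⊗ omega^j) = 0. -/
open scoped BigOperators

/-- A symmetric tensor: invariant under permutation of index entries. -/
def IsSymTensor (d k : ℕ) (A : (Fin k → Fin d) → ℂ) : Prop :=
  ∀ (π : Equiv.Perm (Fin k)) (α : Fin k → Fin d), A (α ∘ π) = A α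

/-- Symmetrization of an array. -/
noncomputable def symmetrize (d k : ℕ) (A : (Fin k → Fin d) → ℂ) : (Fin k → Fin d) → ℂ :=
  fun α => ((Nat.factorial k : ℂ))⁻¹ * ∑ π : Equiv.Perm (Fin k), A (α ∘ π)

/-- Full contraction (bilinear dot product) of two k-tensors. -/
noncomputable def tdot (d k : ℕ) (A B : (Fin k → Fin d) → ℂ) : ℂ :=
  ∑ α : Fin k → Fin d, A α * B α

/-- Partial contraction: A of order m+j contracted with B of order j. -/
noncomputable def contr (d m j : ℕ) (A : (Fin (m + j) → Fin d) → ℂ)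
    (B : (Fin j → Fin d) → ℂ) : (Fin m → Fin d) → ℂ :=
  fun α => ∑ β : Fin j → Fin d, A (Fin.append α β) * B β

/-- Symmetric tensor product. -/
noncomputable def stprod (d j k : ℕ) (A : (Fin j → Fin d) → ℂ) (B : (Fin k → Fin d) → ℂ) :
    (Fin (j + k) → Fin d) → ℂ :=
  symmetrize d (j + k)
    (fun α => A (fun i => α (Fin.castAdd k i)) * B (fun i => α (Fin.natAdd j i)))

/-- Reindexing a tensor along an equality of orders. -/
def tcast (d : ℕ) {a b : ℕ} (h : a = b) (A : (Fin a → Fin d) → ℂ) : (Fin b → Fin d) → ℂ :=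
  fun α => A (α ∘ Fin.cast h)

/-- m-fold symmetric tensor power of a vector. -/
noncomputable def vpow (d m : ℕ) (v : Fin d → ℂ) : (Fin m → Fin d) → ℂ :=
  fun α => ∏ i, v (α i)

/-- Symmetric tensor product of a family of s vectors. -/
noncomputable def symProdFam (d s : ℕ) (v : Fin s → (Fin d → ℂ)) : (Fin s → Fin d) → ℂ :=
  symmetrize d s (fun α => ∏ i, v i (α i))

/-- The identity 2-tensor. -/
noncomputable def I2 (d : ℕ) : (Fin 2 → Fin d) → ℂ := fun α => if α 0 = α 1 then 1 else 0

/-- n-fold symmetric tensor power of the identity 2-tensor. -/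
noncomputable def I2pow (d n : ℕ) : (Fin (n * 2) → Fin d) → ℂ :=
  symmetrize d (n * 2) (fun α => ∏ i : Fin n,
    if α (finProdFinEquiv (i, (0 : Fin 2))) = α (finProdFinEquiv (i, (1 : Fin 2))) then 1 else 0)

/-- Membership in the set V: real and imaginary parts orthonormal. -/
def memV (d : ℕ) (ζ : Fin d → ℂ) : Prop :=
  (∑ j, (ζ j).re * (ζ j).im) = 0 ∧ (∑ j, (ζ j).re ^ 2) = 1 ∧ (∑ j, (ζ j).im ^ 2) = 1

section Aux
open Finset

lemma tdot_symmetrize_left (d k : ℕ) (A B : (Fin k → Fin d) → ℂ) :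
    tdot d k (symmetrize d k A) B
      = ((Nat.factorial k : ℂ))⁻¹ * ∑ π : Equiv.Perm (Fin k), tdot d k A (fun α => B (α ∘ ⇑π⁻¹)) := by
  simp only [tdot, symmetrize, Finset.sum_mul, Finset.mul_sum, mul_assoc]
  rw [Finset.sum_comm]
  refine Finset.sum_congr rfl fun π _ => ?_
  refine Fintype.sum_equiv (Equiv.arrowCongr (π⁻¹ : Equiv.Perm (Fin k)) (Equiv.refl (Fin d)))
    _ _ fun α => ?_
  have h1 : (Equiv.arrowCongr (π⁻¹ : Equiv.Perm (Fin k)) (Equiv.refl (Fin d))) α = α ∘ ⇑π := by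
    funext x
    simp [Equiv.arrowCongr, ← Equiv.Perm.inv_def]
  rw [h1]
  have h2 : (α ∘ ⇑π) ∘ ⇑π⁻¹ = α := by
    funext x
    simp
  rw [h2]

lemma tdot_mul_sum_right (d k : ℕ) (A : (Fin k → Fin d) → ℂ) {ι : Type*} [Fintype ι]
    (c : ℂ) (B : ι → (Fin k → Fin d) → ℂ) :
    tdot d k A (fun α => c * ∑ x : ι, B x α) = c * ∑ x : ι, tdot d k A (B x) := by
  simp only [tdot, Finset.mul_sum]
  rw [Finset.sum_comm]
  exact Finset.sum_congr rfl fun x _ => Finset.sum_congr rfl fun α _ => by ring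

lemma card_filter_comp_le {α β : Type*} [Fintype α] [Fintype β] [DecidableEq β]
    (g : α → β) (hg : Function.Injective g) (P : β → Prop) [DecidablePred P] :
    (Finset.univ.filter fun a => P (g a)).card ≤ (Finset.univ.filter P).card :=
  Finset.card_le_card_of_injOn g (fun a ha => by simp_all) hg.injOn

lemma card_filter_not_lt (m j : ℕ) :
    (Finset.univ.filter (fun i : Fin (m + j) => ¬ ((i : ℕ) < m))).card = j := by
  have hinj : Function.Injective (Fin.natAdd m : Fin j → Fin (m + j)) := fun a b hab => by
    have := congrArg Fin.val hab
    simp only [Fin.coe_natAdd] at this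
    exact Fin.ext (by omega)
  have : (Finset.univ.filter (fun i : Fin (m + j) => ¬ ((i : ℕ) < m)))
      = Finset.map ⟨Fin.natAdd m, hinj⟩ Finset.univ := by
    ext x
    simp only [Finset.mem_filter, Finset.mem_univ, true_and, Finset.mem_map,
      Function.Embedding.coeFn_mk]
    constructor
    · intro hx
      have hx2 := x.isLt
      exact ⟨⟨(x : ℕ) - m, by omega⟩, by ext; simp [Fin.coe_natAdd]; omega⟩
    · rintro ⟨a, rfl⟩
      simp [Fin.coe_natAdd]
  rw [this, Finset.card_map, Finset.card_univ, Fintype.card_fin]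

end Aux
section Aux2
open Finset

lemma pigeon (n : ℕ) (ℓ : Fin (n * 2) → Bool)
    (hcard : (Finset.univ.filter fun i => ℓ i = false).card < n) :
    ∃ p : Fin n, ℓ (finProdFinEquiv (p, (0 : Fin 2))) = true ∧
      ℓ (finProdFinEquiv (p, (1 : Fin 2))) = true := by
  by_contra hc
  push_neg at hc
  set f : Fin n → Fin (n * 2) := fun p =>
    if ℓ (finProdFinEquiv (p, (0 : Fin 2))) = false then finProdFinEquiv (p, (0 : Fin 2))
    else finProdFinEquiv (p, (1 : Fin 2)) with hf
  have hsel : ∀ p : Fin n, ℓ (f p) = false := by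
    intro p
    by_cases h : ℓ (finProdFinEquiv (p, (0 : Fin 2))) = false
    · simp [hf, h]
    · have h0 : ℓ (finProdFinEquiv (p, (0 : Fin 2))) = true := by
        revert h; cases ℓ (finProdFinEquiv (p, (0 : Fin 2))) <;> simp
      have h1' : ℓ (finProdFinEquiv (p, (1 : Fin 2))) = false := by
        cases hh : ℓ (finProdFinEquiv (p, (1 : Fin 2)))
        · rfl
        · exact absurd hh (hc p h0)
      simp [hf, h, h1']
  have hfst : ∀ p : Fin n, (finProdFinEquiv.symm (f p)).1 = p := by
    intro p
    by_cases h : ℓ (finProdFinEquiv (p, (0 : Fin 2))) = false <;>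
      simp [hf, h, Equiv.symm_apply_apply]
  have hinj : Function.Injective f := by
    intro a b hab
    rw [← hfst a, ← hfst b, hab]
  have hle : n ≤ (Finset.univ.filter fun i => ℓ i = false).card := by
    have hmaps : ∀ p ∈ (Finset.univ : Finset (Fin n)),
        f p ∈ Finset.univ.filter fun i => ℓ i = false := by
      intro p _
      rw [Finset.mem_filter]
      exact ⟨Finset.mem_univ _, hsel p⟩
    have h5 := Finset.card_le_card_of_injOn f hmaps hinj.injOn
    rwa [Finset.card_univ, Fintype.card_fin] at h5
  omega

lemma key3 (d n : ℕ) (ζ ω : Fin d → ℂ) (hζ : (∑ i, ζ i * ζ i) = 0)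
    (v : Fin (n * 2) → Fin d → ℂ) (ℓ : Fin (n * 2) → Bool)
    (hv : ∀ i, v i = if ℓ i then ζ else ω)
    (hcard : (Finset.univ.filter fun i => ℓ i = false).card < n) :
    tdot d (n * 2)
      (fun α => ∏ p : Fin n,
        if α (finProdFinEquiv (p, (0 : Fin 2))) = α (finProdFinEquiv (p, (1 : Fin 2))) then (1 : ℂ)
        else 0)
      (fun α => ∏ i, v i (α i)) = 0 := by
  classical
  obtain ⟨p₀, h0, h1⟩ := pigeon n ℓ hcard
  let EB : (Fin n → Fin 2 → Fin d) ≃ (Fin (n * 2) → Fin d) :=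
    (Equiv.curry _ _ _).symm.trans (Equiv.arrowCongr finProdFinEquiv (Equiv.refl _))
  have hEB : ∀ (β : Fin n → Fin 2 → Fin d) (p : Fin n) (s : Fin 2),
      EB β (finProdFinEquiv (p, s)) = β p s := by
    intro β p s
    simp [EB, Equiv.curry, Equiv.arrowCongr, Function.uncurry]
  simp only [tdot]
  rw [← Equiv.sum_comp EB]
  have hterm : ∀ β : Fin n → Fin 2 → Fin d,
      (∏ p : Fin n,
          if EB β (finProdFinEquiv (p, (0 : Fin 2))) = EB β (finProdFinEquiv (p, (1 : Fin 2)))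
          then (1 : ℂ) else 0) * (∏ i, v i (EB β i))
      = ∏ p : Fin n, ((if β p 0 = β p 1 then (1 : ℂ) else 0) *
          (v (finProdFinEquiv (p, (0 : Fin 2))) (β p 0) *
            v (finProdFinEquiv (p, (1 : Fin 2))) (β p 1))) := by
    intro β
    have h2 : (∏ i, v i (EB β i))
        = ∏ p : Fin n, (v (finProdFinEquiv (p, (0 : Fin 2))) (β p 0) *
            v (finProdFinEquiv (p, (1 : Fin 2))) (β p 1)) := by
      rw [← Equiv.prod_comp finProdFinEquiv (fun i => v i (EB β i))]
      rw [Fintype.prod_prod_type]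
      refine Finset.prod_congr rfl fun p _ => ?_
      rw [Fin.prod_univ_two]
      rw [hEB, hEB]
    rw [h2, ← Finset.prod_mul_distrib]
    refine Finset.prod_congr rfl fun p _ => ?_
    rw [hEB, hEB]
  rw [Finset.sum_congr rfl fun β _ => hterm β]
  rw [← Fintype.prod_sum (f := fun (p : Fin n) (c : Fin 2 → Fin d) =>
    (if c 0 = c 1 then (1 : ℂ) else 0) *
      (v (finProdFinEquiv (p, (0 : Fin 2))) (c 0) * v (finProdFinEquiv (p, (1 : Fin 2))) (c 1)))]
  refine Finset.prod_eq_zero (Finset.mem_univ p₀) ?_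
  have hsum : ∀ ξ : Fin d → ℂ,
      (∑ c : Fin 2 → Fin d, (if c 0 = c 1 then (1 : ℂ) else 0) * (ξ (c 0) * ξ (c 1)))
        = ∑ x : Fin d, ξ x * ξ x := by
    intro ξ
    rw [← Equiv.sum_comp (piFinTwoEquiv (fun _ : Fin 2 => Fin d)).symm]
    rw [Fintype.sum_prod_type]
    refine Finset.sum_congr rfl fun x _ => ?_
    simp [piFinTwoEquiv, ite_mul]
  simp only [hv, h0, h1, if_true]
  rw [hsum ζ, hζ]

end Aux2
section Aux3
open Finset

lemma key2 (d n : ℕ) (ζ ω : Fin d → ℂ) (hζ : (∑ i, ζ i * ζ i) = 0)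
    (v : Fin (n * 2) → Fin d → ℂ) (ℓ : Fin (n * 2) → Bool)
    (hv : ∀ i, v i = if ℓ i then ζ else ω)
    (hcard : (Finset.univ.filter fun i => ℓ i = false).card < n) :
    tdot d (n * 2) (I2pow d n) (fun α => ∏ i, v i (α i)) = 0 := by
  rw [show I2pow d n = symmetrize d (n * 2) (fun α => ∏ p : Fin n,
      if α (finProdFinEquiv (p, (0 : Fin 2))) = α (finProdFinEquiv (p, (1 : Fin 2))) then (1 : ℂ)
      else 0) from rfl]
  rw [tdot_symmetrize_left]
  refine mul_eq_zero_of_right _ (Finset.sum_eq_zero fun τ _ => ?_)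
  have hre : (fun α : Fin (n * 2) → Fin d => ∏ i, v i ((α ∘ ⇑τ⁻¹) i))
      = fun α => ∏ i, v (τ i) (α i) := by
    funext α
    exact (Fintype.prod_equiv τ (fun i => v (τ i) (α i)) (fun i => v i (α (⇑τ⁻¹ i)))
      (fun x => by simp)).symm
  rw [hre]
  refine key3 d n ζ ω hζ _ (fun i => ℓ (τ i)) (fun i => hv (τ i)) ?_
  calc (Finset.univ.filter fun i => ℓ (τ i) = false).card
      ≤ (Finset.univ.filter fun i => ℓ i = false).card :=
        card_filter_comp_le ⇑τ τ.injective (fun i => ℓ i = false)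
    _ < n := hcard

lemma natAdd_inj (k m : ℕ) : Function.Injective (Fin.natAdd k : Fin m → Fin (k + m)) := by
  intro a b hab
  have := congrArg Fin.val hab
  simp only [Fin.coe_natAdd] at this
  exact Fin.ext (by omega)

lemma key (d k n : ℕ) (ζ ω : Fin d → ℂ) (hζ : (∑ i, ζ i * ζ i) = 0)
    (A : (Fin k → Fin d) → ℂ)
    (u : Fin (k + n * 2) → Fin d → ℂ) (ℓ : Fin (k + n * 2) → Bool)
    (hu : ∀ i, u i = if ℓ i then ζ else ω)
    (hcard : (Finset.univ.filter fun i => ℓ i = false).card < n) :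
    tdot d (k + n * 2)
      (fun α => A (fun i => α (Fin.castAdd (n * 2) i)) * I2pow d n (fun i => α (Fin.natAdd k i)))
      (fun α => ∏ i, u i (α i)) = 0 := by
  classical
  let EE : ((Fin k → Fin d) × (Fin (n * 2) → Fin d)) ≃ (Fin (k + n * 2) → Fin d) :=
    (Equiv.sumArrowEquivProdArrow _ _ _).symm.trans
      (Equiv.arrowCongr finSumFinEquiv (Equiv.refl _))
  have hEE1 : ∀ (p : (Fin k → Fin d) × (Fin (n * 2) → Fin d)) (i : Fin k),
      EE p (Fin.castAdd (n * 2) i) = p.1 i := by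
    intro p i
    simp [EE, Equiv.sumArrowEquivProdArrow, Equiv.arrowCongr,
      finSumFinEquiv_symm_apply_castAdd]
  have hEE2 : ∀ (p : (Fin k → Fin d) × (Fin (n * 2) → Fin d)) (i : Fin (n * 2)),
      EE p (Fin.natAdd k i) = p.2 i := by
    intro p i
    simp [EE, Equiv.sumArrowEquivProdArrow, Equiv.arrowCongr,
      finSumFinEquiv_symm_apply_natAdd]
  simp only [tdot]
  rw [← Equiv.sum_comp EE]
  rw [Fintype.sum_prod_type]
  refine Finset.sum_eq_zero fun α₁ _ => ?_
  have hterm : ∀ α₂ : Fin (n * 2) → Fin d,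
      A (fun i => EE (α₁, α₂) (Fin.castAdd (n * 2) i)) *
          I2pow d n (fun i => EE (α₁, α₂) (Fin.natAdd k i)) *
        ∏ i, u i (EE (α₁, α₂) i)
      = (A α₁ * ∏ i : Fin k, u (Fin.castAdd (n * 2) i) (α₁ i)) *
          (I2pow d n α₂ * ∏ i : Fin (n * 2), u (Fin.natAdd k i) (α₂ i)) := by
    intro α₂
    have e1 : (fun i => EE (α₁, α₂) (Fin.castAdd (n * 2) i)) = α₁ := funext fun i => hEE1 _ i
    have e2 : (fun i => EE (α₁, α₂) (Fin.natAdd k i)) = α₂ := funext fun i => hEE2 _ i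
    have e3 : (∏ i, u i (EE (α₁, α₂) i))
        = (∏ i : Fin k, u (Fin.castAdd (n * 2) i) (α₁ i)) *
            ∏ i : Fin (n * 2), u (Fin.natAdd k i) (α₂ i) := by
      rw [Fin.prod_univ_add]
      congr 1
      · exact Finset.prod_congr rfl fun i _ => by rw [hEE1]
      · exact Finset.prod_congr rfl fun i _ => by rw [hEE2]
    rw [e1, e2, e3]
    ring
  rw [Finset.sum_congr rfl fun α₂ _ => hterm α₂]
  rw [← Finset.mul_sum]
  have hz : tdot d (n * 2) (I2pow d n) (fun α₂ => ∏ i : Fin (n * 2), u (Fin.natAdd k i) (α₂ i))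
      = 0 := by
    refine key2 d n ζ ω hζ _ (fun i => ℓ (Fin.natAdd k i)) (fun i => hu (Fin.natAdd k i)) ?_
    calc (Finset.univ.filter fun i => ℓ (Fin.natAdd k i) = false).card
        ≤ (Finset.univ.filter fun i => ℓ i = false).card :=
          card_filter_comp_le (Fin.natAdd k) (natAdd_inj k (n * 2)) (fun i => ℓ i = false)
      _ < n := hcard
  rw [show (∑ α₂ : Fin (n * 2) → Fin d,
      I2pow d n α₂ * ∏ i : Fin (n * 2), u (Fin.natAdd k i) (α₂ i))
    = tdot d (n * 2) (I2pow d n) (fun α₂ => ∏ i : Fin (n * 2), u (Fin.natAdd k i) (α₂ i))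
    from rfl, hz, mul_zero]

end Aux3
/-- (A ⊗ I₂ⁿ) · (ζ^{k+2n-j} ⊗ ω^j) = 0 for ζ·ζ = 0 and j < n. -/
theorem tprod_I2pow_contract_zero (d k n j : ℕ) (hn : 1 ≤ n) (hj : j < n)
    (ζ ω : Fin d → ℂ) (hζ : (∑ i, ζ i * ζ i) = 0)
    (A : (Fin k → Fin d) → ℂ) (hA : IsSymTensor d k A) :
    tdot d (k + n * 2) (stprod d k (n * 2) A (I2pow d n))
      (tcast d (by omega : (k + 2 * n - j) + j = k + n * 2)
        (stprod d (k + 2 * n - j) j (vpow d (k + 2 * n - j) ζ) (vpow d j ω))) = 0 := by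
  classical
  have h : (k + 2 * n - j) + j = k + n * 2 := by omega
  set M := k + 2 * n - j with hMdef
  rw [show stprod d k (n * 2) A (I2pow d n) = symmetrize d (k + n * 2)
      (fun α => A (fun i => α (Fin.castAdd (n * 2) i)) *
        I2pow d n (fun i => α (Fin.natAdd k i))) from rfl]
  rw [tdot_symmetrize_left]
  refine mul_eq_zero_of_right _ (Finset.sum_eq_zero fun π _ => ?_)
  set g₀ : (Fin (M + j) → Fin d) → ℂ := fun β =>
    vpow d M ζ (fun i => β (Fin.castAdd j i)) * vpow d j ω (fun i => β (Fin.natAdd M i))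
    with hg₀def
  have hT : (fun α : Fin (k + n * 2) → Fin d =>
      tcast d h (stprod d M j (vpow d M ζ) (vpow d j ω)) (α ∘ ⇑π⁻¹))
      = fun α => ((Nat.factorial (M + j) : ℂ))⁻¹ *
          ∑ ρ : Equiv.Perm (Fin (M + j)), g₀ (((α ∘ ⇑π⁻¹) ∘ Fin.cast h) ∘ ⇑ρ) := by
    funext α
    rfl
  rw [hT]
  rw [tdot_mul_sum_right d (k + n * 2) _ ((Nat.factorial (M + j) : ℂ))⁻¹
    (fun (ρ : Equiv.Perm (Fin (M + j))) (α : Fin (k + n * 2) → Fin d) =>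
      g₀ (((α ∘ ⇑π⁻¹) ∘ Fin.cast h) ∘ ⇑ρ))]
  refine mul_eq_zero_of_right _ (Finset.sum_eq_zero fun ρ _ => ?_)
  set Q : Fin (M + j) ≃ Fin (k + n * 2) := ρ.trans ((finCongr h).trans π⁻¹) with hQdef
  have hg : (fun α : Fin (k + n * 2) → Fin d => g₀ (((α ∘ ⇑π⁻¹) ∘ Fin.cast h) ∘ ⇑ρ))
      = fun α => ∏ i' : Fin (k + n * 2),
          (if ((Q.symm i' : Fin (M + j)) : ℕ) < M then ζ else ω) (α i') := by
    funext α
    have hQ : ∀ x : Fin (M + j), Q x = π⁻¹ (Fin.cast h (ρ x)) := fun x => rfl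
    have step1 : g₀ (((α ∘ ⇑π⁻¹) ∘ Fin.cast h) ∘ ⇑ρ)
        = ∏ i : Fin (M + j), (if (i : ℕ) < M then ζ else ω) (α (Q i)) := by
      calc g₀ (((α ∘ ⇑π⁻¹) ∘ Fin.cast h) ∘ ⇑ρ)
          = (∏ i : Fin M, ζ (α (Q (Fin.castAdd j i)))) *
              ∏ i : Fin j, ω (α (Q (Fin.natAdd M i))) := by
            simp only [hg₀def, vpow]
            congr 1 <;> exact Finset.prod_congr rfl fun i _ => by rw [hQ]; rfl
        _ = ∏ i : Fin (M + j), (if (i : ℕ) < M then ζ else ω) (α (Q i)) := by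
            rw [Fin.prod_univ_add
              (f := fun i : Fin (M + j) => (if (i : ℕ) < M then ζ else ω) (α (Q i)))]
            congr 1
            · refine Finset.prod_congr rfl fun i _ => ?_
              have hlt : ((Fin.castAdd j i : Fin (M + j)) : ℕ) < M := by
                simp only [Fin.coe_castAdd]
                exact i.isLt
              rw [if_pos hlt]
            · refine Finset.prod_congr rfl fun i _ => ?_
              have hlt : ¬ ((Fin.natAdd M i : Fin (M + j)) : ℕ) < M := by
                simp only [Fin.coe_natAdd]
                omega
              rw [if_neg hlt]
    rw [step1]
    exact Fintype.prod_equiv Q (fun i => (if (i : ℕ) < M then ζ else ω) (α (Q i)))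
      (fun i' => (if ((Q.symm i' : Fin (M + j)) : ℕ) < M then ζ else ω) (α i'))
      fun i => by simp
  rw [hg]
  refine key d k n ζ ω hζ A _ (fun i' => decide (((Q.symm i' : Fin (M + j)) : ℕ) < M))
    (fun i' => by by_cases hc : ((Q.symm i' : Fin (M + j)) : ℕ) < M <;> simp [hc]) ?_
  calc (Finset.univ.filter fun i' =>
        decide (((Q.symm i' : Fin (M + j)) : ℕ) < M) = false).card
      ≤ (Finset.univ.filter fun i : Fin (M + j) => decide ((i : ℕ) < M) = false).card :=
        card_filter_comp_le ⇑Q.symm Q.symm.injective (fun i => decide ((i : ℕ) < M) = false)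
    _ = (Finset.univ.filter fun i : Fin (M + j) => ¬ ((i : ℕ) < M)).card := by
        congr 1
        apply Finset.filter_congr
        intro i _
        simp
    _ = j := card_filter_not_lt M j
    _ < n := hj
end

section
/- If A is a symmetric k-tensor on C^d with k >= 2 and d >= 3 such that A · zeta^k = 0 for every zeta in C^d with Re(zeta) · Im(zeta) = 0 and |Re(zeta)| = |Im(zeta)| = 1, then there exists a symmetric (k-2)-tensor B such that A = I_2 ⊗ B, where I_2 is the identity 2-tensor. -/
open scoped BigOperators

/-! ### Auxiliary material -/

open MvPolynomial Finset

/-- The exponent multiindex of a tuple. -/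
noncomputable def tvMono {d k : ℕ} (α : Fin k → Fin d) : Fin d →₀ ℕ :=
  ∑ i, Finsupp.single (α i) 1

/-- The polynomial associated with a tensor. -/
noncomputable def toPoly (d k : ℕ) (A : (Fin k → Fin d) → ℂ) : MvPolynomial (Fin d) ℂ :=
  ∑ α : Fin k → Fin d, MvPolynomial.monomial (tvMono α) (A α)

section TvMono

variable {d k : ℕ}

lemma tvMono_apply (β : Fin k → Fin d) (j : Fin d) :
    tvMono β j = (univ.filter fun i => β i = j).card := by
  classical
  rw [tvMono, Finset.sum_apply', Finset.card_filter]
  refine Finset.sum_congr rfl fun i _ => ?_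
  rw [Finsupp.single_apply]

lemma degree_tvMono (β : Fin k → Fin d) : (tvMono β).degree = k := by
  classical
  have h1 : (tvMono β).degree = ∑ j : Fin d, tvMono β j := by
    rw [Finsupp.degree]
    exact Finset.sum_subset (Finset.subset_univ _)
      (fun j _ hj => Finsupp.notMem_support_iff.mp hj)
  rw [h1]
  have h2 := Finset.card_eq_sum_card_fiberwise
    (f := β) (s := Finset.univ) (t := Finset.univ) (fun i _ => Finset.mem_univ _)
  simp only [Finset.card_univ, Fintype.card_fin] at h2
  calc ∑ j : Fin d, tvMono β j = ∑ j : Fin d, (univ.filter fun i => β i = j).card :=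
        Finset.sum_congr rfl fun j _ => (tvMono_apply β j)
    _ = k := h2.symm

lemma tvMono_comp_perm (β : Fin k → Fin d) (π : Equiv.Perm (Fin k)) :
    tvMono (β ∘ π) = tvMono β :=
  Equiv.sum_comp π (fun i => Finsupp.single (β i) 1)

lemma tvMono_count (β : Fin k → Fin d) (j : Fin d) :
    tvMono β j = Multiset.count j (Multiset.map β Finset.univ.val) := by
  rw [tvMono_apply, Multiset.count_map]
  have h : (univ.filter fun i => β i = j) = (univ.filter fun a => j = β a) := by
    apply Finset.filter_congr; intro a _; simp [eq_comm]
  rw [h]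
  rfl

lemma exists_perm_of_tvMono_eq {β β' : Fin k → Fin d}
    (h : tvMono β = tvMono β') : ∃ π : Equiv.Perm (Fin k), β ∘ π = β' := by
  classical
  have hm : Multiset.map β Finset.univ.val = Multiset.map β' Finset.univ.val := by
    ext j
    rw [← tvMono_count, ← tvMono_count, h]
  rw [Fin.univ_val_map, Fin.univ_val_map, Multiset.coe_eq_coe] at hm
  have h1 : List.Perm (List.ofFn (β ∘ Tuple.sort β)) (List.ofFn (β' ∘ Tuple.sort β')) :=
    (((Tuple.sort β).ofFn_comp_perm β).trans hm).trans
      ((Tuple.sort β').ofFn_comp_perm β').symm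
  have h2 : β ∘ Tuple.sort β = β' ∘ Tuple.sort β' :=
    List.ofFn_injective <| List.Perm.eq_of_sortedLE
      (Tuple.monotone_sort β).sortedLE_ofFn (Tuple.monotone_sort β').sortedLE_ofFn h1
  refine ⟨(Tuple.sort β) * (Tuple.sort β')⁻¹, ?_⟩
  funext i
  have h3 := congrFun h2 ((Tuple.sort β')⁻¹ i)
  simpa using h3

lemma exists_fn_of_degree {m : ℕ} (μ : Fin d →₀ ℕ) (hμ : μ.degree = m) :
    ∃ β : Fin m → Fin d, tvMono β = μ := by
  classical
  have hcard : Multiset.card μ.toMultiset = m := by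
    rw [Finsupp.card_toMultiset, ← hμ, Finsupp.degree]; rfl
  set l := μ.toMultiset.toList with hl
  have hlen : l.length = m := by rw [hl, Multiset.length_toList, hcard]
  refine ⟨fun i => l.get (Fin.cast hlen.symm i), ?_⟩
  ext j
  have hofn : List.ofFn (fun i : Fin m => l.get (Fin.cast hlen.symm i)) = l := by
    subst hlen; simp [List.ofFn_get]
  rw [tvMono_count, Fin.univ_val_map, hofn, ← Finsupp.count_toMultiset μ j,
    ← Multiset.coe_toList μ.toMultiset]

end TvMono

section ToPoly

variable {d k : ℕ}

lemma prodX_eq (α : Fin k → Fin d) :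
    (∏ i, (X (α i) : MvPolynomial (Fin d) ℂ)) = monomial (tvMono α) 1 := by
  classical
  rw [tvMono]
  induction (univ : Finset (Fin k)) using Finset.induction_on with
  | empty => simp
  | insert a s hnot ih =>
      rw [Finset.prod_insert hnot, Finset.sum_insert hnot, ih,
        show (X (α _) : MvPolynomial (Fin d) ℂ) = monomial (Finsupp.single (α _) 1) 1 by
          rw [← X_pow_eq_monomial, pow_one],
        monomial_mul, one_mul]

lemma toPoly_eval (A : (Fin k → Fin d) → ℂ) (ζ : Fin d → ℂ) :
    MvPolynomial.eval ζ (toPoly d k A) = tdot d k A (vpow d k ζ) := by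
  rw [toPoly, tdot, map_sum]
  refine Finset.sum_congr rfl fun α _ => ?_
  rw [show (monomial (tvMono α)) (A α) = MvPolynomial.C (A α) * ∏ i, X (α i) by
    rw [prodX_eq, C_mul_monomial, mul_one]]
  simp [vpow]

lemma coeff_toPoly (A : (Fin k → Fin d) → ℂ) (μ : Fin d →₀ ℕ) :
    coeff μ (toPoly d k A) = ∑ β ∈ univ.filter (fun β => tvMono β = μ), A β := by
  classical
  rw [toPoly, coeff_sum, Finset.sum_filter]
  refine Finset.sum_congr rfl fun β _ => ?_
  rw [coeff_monomial]

lemma toPoly_isHomogeneous (A : (Fin k → Fin d) → ℂ) :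
    (toPoly d k A).IsHomogeneous k :=
  IsHomogeneous.sum _ _ _ fun α _ => isHomogeneous_monomial _ (degree_tvMono α)

lemma toPoly_sub (A B : (Fin k → Fin d) → ℂ) :
    toPoly d k (fun α => A α - B α) = toPoly d k A - toPoly d k B := by
  rw [toPoly, toPoly, toPoly, ← Finset.sum_sub_distrib]
  refine Finset.sum_congr rfl fun α _ => ?_
  rw [map_sub]

lemma toPoly_comp_perm (A : (Fin k → Fin d) → ℂ) (π : Equiv.Perm (Fin k)) :
    toPoly d k (fun α => A (α ∘ π)) = toPoly d k A := by
  rw [toPoly, toPoly]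
  refine Fintype.sum_equiv (Equiv.arrowCongr π.symm (Equiv.refl (Fin d))) _ _ fun γ => ?_
  have h1 : (Equiv.arrowCongr π.symm (Equiv.refl (Fin d))) γ = γ ∘ ⇑π := by
    funext i; simp [Equiv.arrowCongr]
  rw [h1, tvMono_comp_perm]

lemma toPoly_symmetrize (A : (Fin k → Fin d) → ℂ) :
    toPoly d k (symmetrize d k A) = toPoly d k A := by
  classical
  have hfac : ((Nat.factorial k : ℂ)) ≠ 0 := by
    exact_mod_cast Nat.cast_ne_zero.mpr (Nat.factorial_ne_zero k)
  calc toPoly d k (symmetrize d k A)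
      = ∑ α : Fin k → Fin d, ∑ π : Equiv.Perm (Fin k),
          (Nat.factorial k : ℂ)⁻¹ • monomial (tvMono α) (A (α ∘ π)) := by
        rw [toPoly]
        refine Finset.sum_congr rfl fun α _ => ?_
        rw [symmetrize, ← Finset.smul_sum, ← map_sum (monomial (tvMono α)), ← smul_eq_mul,
          map_smul]
    _ = (Nat.factorial k : ℂ)⁻¹ • ∑ π : Equiv.Perm (Fin k),
          toPoly d k (fun α => A (α ∘ π)) := by
        rw [Finset.sum_comm, Finset.smul_sum]
        refine Finset.sum_congr rfl fun π _ => ?_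
        rw [toPoly, Finset.smul_sum]
    _ = toPoly d k A := by
        rw [Finset.sum_congr rfl fun π _ => toPoly_comp_perm A π, Finset.sum_const,
          Finset.card_univ, Fintype.card_perm, Fintype.card_fin,
          ← Nat.cast_smul_eq_nsmul ℂ, smul_smul, inv_mul_cancel₀ hfac, one_smul]

lemma symmetrize_isSym (A : (Fin k → Fin d) → ℂ) :
    IsSymTensor d k (symmetrize d k A) := by
  intro π α
  rw [symmetrize, symmetrize]
  congr 1
  calc ∑ σ : Equiv.Perm (Fin k), A ((α ∘ ⇑π) ∘ ⇑σ)
      = ∑ σ : Equiv.Perm (Fin k), A (α ∘ ⇑(π * σ)) := by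
        refine Finset.sum_congr rfl fun σ _ => ?_
        rfl
    _ = ∑ τ : Equiv.Perm (Fin k), A (α ∘ ⇑τ) :=
        Equiv.sum_comp (Equiv.mulLeft π) (fun τ => A (α ∘ ⇑τ))

lemma symTensor_eq_zero_of_toPoly {A : (Fin k → Fin d) → ℂ}
    (hA : IsSymTensor d k A) (h : toPoly d k A = 0) : ∀ α, A α = 0 := by
  classical
  intro α
  have h1 : (0 : ℂ) = ∑ β ∈ univ.filter (fun β => tvMono β = tvMono α), A β := by
    rw [← coeff_toPoly, h, coeff_zero]
  have h2 : ∀ β ∈ univ.filter (fun β => tvMono β = tvMono α), A β = A α := by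
    intro β hβ
    obtain ⟨π, hπ⟩ := exists_perm_of_tvMono_eq (Finset.mem_filter.mp hβ).2
    rw [← hπ, hA π β]
  rw [Finset.sum_congr rfl h2, Finset.sum_const, ← Nat.cast_smul_eq_nsmul ℂ,
    smul_eq_mul] at h1
  have h3 : α ∈ univ.filter (fun β => tvMono β = tvMono α) := by simp
  have h4 : (((univ.filter (fun β : Fin k → Fin d => tvMono β = tvMono α)).card : ℕ) : ℂ) ≠ 0 :=
    Nat.cast_ne_zero.mpr (Finset.card_ne_zero_of_mem h3)
  exact (mul_eq_zero.mp h1.symm).resolve_left h4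

end ToPoly

section Tcast

variable {d : ℕ} {a b : ℕ}

lemma isSymTensor_tcast (h : a = b) {A : (Fin a → Fin d) → ℂ}
    (hA : IsSymTensor d a A) : IsSymTensor d b (tcast d h A) := by
  intro π α
  rw [tcast, tcast]
  have hσ : (α ∘ ⇑π) ∘ Fin.cast h
      = (α ∘ Fin.cast h) ∘ ⇑(((finCongr h).trans π).trans (finCongr h.symm)) := by
    funext i
    simp [Fin.ext_iff]
  rw [hσ]
  exact hA _ _

lemma toPoly_tcast (h : a = b) (A : (Fin a → Fin d) → ℂ) :
    toPoly d b (tcast d h A) = toPoly d a A := by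
  subst h
  have h0 : tcast d rfl A = A := by
    funext α
    rw [tcast]
    congr
  rw [h0]

end Tcast

section Prod

variable {d j k : ℕ}

lemma tvMono_append (γ : Fin j → Fin d) (δ : Fin k → Fin d) :
    tvMono (Fin.append γ δ) = tvMono γ + tvMono δ := by
  rw [tvMono, tvMono, tvMono, Fin.sum_univ_add]
  congr 1
  · exact Finset.sum_congr rfl fun i _ => by rw [Fin.append_left]
  · exact Finset.sum_congr rfl fun i _ => by rw [Fin.append_right]

/-- The splitting equivalence. -/
noncomputable def splitEquiv (d j k : ℕ) :
    ((Fin j → Fin d) × (Fin k → Fin d)) ≃ (Fin (j + k) → Fin d) where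
  toFun p := Fin.append p.1 p.2
  invFun α := (fun i => α (Fin.castAdd k i), fun i => α (Fin.natAdd j i))
  left_inv p := Prod.ext (funext fun i => Fin.append_left _ _ _)
    (funext fun i => Fin.append_right _ _ _)
  right_inv α := by
    funext i
    exact congrFun Fin.append_castAdd_natAdd i

lemma toPoly_mulsplit (A : (Fin j → Fin d) → ℂ) (B : (Fin k → Fin d) → ℂ) :
    toPoly d (j + k)
      (fun α => A (fun i => α (Fin.castAdd k i)) * B (fun i => α (Fin.natAdd j i)))
      = toPoly d j A * toPoly d k B := by
  classical
  rw [toPoly, toPoly, toPoly, Finset.sum_mul_sum]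
  have hps : (∑ p : (Fin j → Fin d) × (Fin k → Fin d),
      (monomial (tvMono p.1)) (A p.1) * (monomial (tvMono p.2)) (B p.2))
      = ∑ γ : Fin j → Fin d, ∑ δ : Fin k → Fin d,
        (monomial (tvMono γ)) (A γ) * (monomial (tvMono δ)) (B δ) := by
    rw [Fintype.sum_prod_type]
  rw [← hps]
  refine (Fintype.sum_equiv (splitEquiv d j k) _ _ fun p => ?_).symm
  have h1 : (fun i => splitEquiv d j k p (Fin.castAdd k i)) = p.1 := by
    funext i; exact Fin.append_left _ _ _
  have h2 : (fun i => splitEquiv d j k p (Fin.natAdd j i)) = p.2 := by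
    funext i; exact Fin.append_right _ _ _
  have h3 : tvMono (splitEquiv d j k p) = tvMono p.1 + tvMono p.2 := tvMono_append _ _
  rw [monomial_mul, h1, h2, h3]

lemma toPoly_stprod (A : (Fin j → Fin d) → ℂ) (B : (Fin k → Fin d) → ℂ) :
    toPoly d (j + k) (stprod d j k A B) = toPoly d j A * toPoly d k B := by
  rw [stprod, toPoly_symmetrize, toPoly_mulsplit]

noncomputable def splitEquiv2 (d : ℕ) : (Fin d × Fin d) ≃ (Fin 2 → Fin d) :=
  (piFinTwoEquiv (fun _ => Fin d)).symm

lemma toPoly_I2 {d : ℕ} : toPoly d 2 (I2 d) = ∑ i : Fin d, (X i : MvPolynomial (Fin d) ℂ) ^ 2 := by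
  classical
  apply MvPolynomial.funext
  intro ζ
  rw [toPoly_eval, tdot, map_sum]
  have hre : ∀ α : Fin 2 → Fin d, I2 d α * vpow d 2 ζ α
      = (if α 0 = α 1 then ζ (α 0) * ζ (α 1) else 0) := by
    intro α
    rw [I2, vpow, Fin.prod_univ_two, ite_mul, one_mul, zero_mul]
  rw [Finset.sum_congr rfl fun α _ => hre α]
  rw [← (Fintype.sum_equiv (splitEquiv2 d) _ _ fun p => rfl)]
  rw [Fintype.sum_prod_type]
  refine Finset.sum_congr rfl fun i _ => ?_
  simp [splitEquiv2, Finset.sum_ite_eq, sq]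

end Prod

section Reconstruct

variable {d m : ℕ}

lemma exists_tensor_of_homogeneous (R : MvPolynomial (Fin d) ℂ) (hR : R.IsHomogeneous m) :
    ∃ S : (Fin m → Fin d) → ℂ, toPoly d m S = R := by
  classical
  refine ⟨fun β =>
    (((univ.filter fun γ : Fin m → Fin d => tvMono γ = tvMono β).card : ℕ) : ℂ)⁻¹
      * coeff (tvMono β) R, ?_⟩
  apply MvPolynomial.ext
  intro μ
  rw [coeff_toPoly]
  have hsummand : ∀ β ∈ univ.filter (fun β : Fin m → Fin d => tvMono β = μ),
      (((univ.filter fun γ : Fin m → Fin d => tvMono γ = tvMono β).card : ℕ) : ℂ)⁻¹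
        * coeff (tvMono β) R
      = (((univ.filter fun γ : Fin m → Fin d => tvMono γ = μ).card : ℕ) : ℂ)⁻¹
        * coeff μ R := by
    intro β hβ
    rw [(Finset.mem_filter.mp hβ).2]
  rw [Finset.sum_congr rfl hsummand, Finset.sum_const, ← Nat.cast_smul_eq_nsmul ℂ, smul_eq_mul]
  by_cases h0 : (univ.filter fun γ : Fin m → Fin d => tvMono γ = μ).card = 0
  · rw [h0]
    simp only [Nat.cast_zero, zero_mul]
    refine (hR.coeff_eq_zero fun hdeg => ?_).symm
    obtain ⟨β, hβ⟩ := exists_fn_of_degree μ hdeg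
    have hmem : β ∈ univ.filter (fun γ : Fin m → Fin d => tvMono γ = μ) := by simp [hβ]
    exact (Finset.card_ne_zero_of_mem hmem) h0
  · rw [← mul_assoc, mul_inv_cancel₀ (Nat.cast_ne_zero.mpr h0), one_mul]

end Reconstruct

section Component

lemma eq_mul_homogeneousComponent {d k : ℕ} (hk : 2 ≤ k) {P R q : MvPolynomial (Fin d) ℂ}
    (hq : q.IsHomogeneous 2) (hP : P.IsHomogeneous k) (hPR : P = q * R) :
    P = q * homogeneousComponent (k - 2) R := by
  classical
  have h1 : P = ∑ i ∈ Finset.range (R.totalDegree + 1), q * homogeneousComponent i R := by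
    rw [← Finset.mul_sum, sum_homogeneousComponent, ← hPR]
  have h2 : homogeneousComponent k P = P := by
    rw [homogeneousComponent_of_mem ((mem_homogeneousSubmodule k P).mpr hP), if_pos rfl]
  have h3 : homogeneousComponent k P
      = ∑ i ∈ Finset.range (R.totalDegree + 1),
          homogeneousComponent k (q * homogeneousComponent i R) := by
    conv_lhs => rw [h1]
    rw [map_sum]
  have h4 : ∀ i, homogeneousComponent k (q * homogeneousComponent i R)
      = if k - 2 = i then q * homogeneousComponent i R else 0 := by
    intro i
    rw [homogeneousComponent_of_mem ((mem_homogeneousSubmodule _ _).mpr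
      (hq.mul (homogeneousComponent_isHomogeneous i R)))]
    congr 1
    simp only [eq_iff_iff]
    omega
  rw [Finset.sum_congr rfl (fun i _ => h4 i), Finset.sum_ite_eq] at h3
  by_cases hmem : k - 2 ∈ Finset.range (R.totalDegree + 1)
  · rw [if_pos hmem] at h3
    rw [← h2, h3]
  · rw [if_neg hmem] at h3
    have h5 : homogeneousComponent (k - 2) R = 0 := by
      refine homogeneousComponent_eq_zero _ _ ?_
      simp only [Finset.mem_range] at hmem
      omega
    rw [h5, mul_zero, ← h2, h3]

end Component

section Scaling

lemma vanish_on_cone {d k : ℕ} (hk : 1 ≤ k) (A : (Fin k → Fin d) → ℂ)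
    (h : ∀ ζ : Fin d → ℂ, memV d ζ → tdot d k A (vpow d k ζ) = 0) :
    ∀ ζ : Fin d → ℂ, (∑ j, ζ j ^ 2) = 0 → tdot d k A (vpow d k ζ) = 0 := by
  intro ζ hζ
  have e1 : ∀ j, (ζ j ^ 2).re = (ζ j).re ^ 2 - (ζ j).im ^ 2 := fun j => by
    rw [pow_two, Complex.mul_re]; ring
  have e2 : ∀ j, (ζ j ^ 2).im = 2 * ((ζ j).re * (ζ j).im) := fun j => by
    rw [pow_two, Complex.mul_im]; ring
  have hre0 : (∑ j, ζ j ^ 2).re = 0 := by rw [hζ]; rfl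
  have him0 : (∑ j, ζ j ^ 2).im = 0 := by rw [hζ]; rfl
  rw [Complex.re_sum] at hre0
  rw [Complex.im_sum] at him0
  have hre' : ∑ j, ((ζ j).re ^ 2 - (ζ j).im ^ 2) = 0 :=
    (Finset.sum_congr rfl fun j _ => (e1 j).symm).trans hre0
  have him1 : ∑ j, 2 * ((ζ j).re * (ζ j).im) = 0 :=
    (Finset.sum_congr rfl fun j _ => (e2 j).symm).trans him0
  rw [← Finset.mul_sum] at him1
  have him : ∑ j, (ζ j).re * (ζ j).im = 0 := by linarith
  have hx : ∑ j, (ζ j).re ^ 2 = ∑ j, (ζ j).im ^ 2 := by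
    have h2 : (∑ j, (ζ j).re ^ 2) - (∑ j, (ζ j).im ^ 2) = 0 := by
      rw [← Finset.sum_sub_distrib]; exact hre'
    linarith
  set S := ∑ j, (ζ j).re ^ 2 with hSdef
  have hS0 : 0 ≤ S := Finset.sum_nonneg fun j _ => sq_nonneg _
  by_cases hS : S = 0
  · -- ζ = 0
    have hre : ∀ j, (ζ j).re = 0 := fun j =>
      pow_eq_zero_iff two_ne_zero |>.mp
        (Finset.sum_eq_zero_iff_of_nonneg (fun j _ => sq_nonneg _) |>.mp hS j (Finset.mem_univ j))
    have him' : ∀ j, (ζ j).im = 0 := fun j =>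
      pow_eq_zero_iff two_ne_zero |>.mp
        (Finset.sum_eq_zero_iff_of_nonneg (fun j _ => sq_nonneg _) |>.mp (show ∑ j, (ζ j).im ^ 2 = 0 from hx ▸ hS) j
          (Finset.mem_univ j))
    have hζ0 : ∀ j, ζ j = 0 := fun j => Complex.ext (hre j) (him' j)
    rw [tdot]
    apply Finset.sum_eq_zero
    intro α _
    rw [vpow, Finset.prod_eq_zero (Finset.mem_univ (⟨0, by omega⟩ : Fin k)) (hζ0 _), mul_zero]
  · have hSpos : 0 < S := lt_of_le_of_ne hS0 (Ne.symm hS)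
    set t := Real.sqrt S with htdef
    have ht : t ≠ 0 := Real.sqrt_ne_zero'.mpr hSpos
    have ht2 : t ^ 2 = S := Real.sq_sqrt hS0
    set η : Fin d → ℂ := fun j => ((t⁻¹ : ℝ) : ℂ) * ζ j with hη
    have hηre : ∀ j, (η j).re = t⁻¹ * (ζ j).re := fun j => by
      rw [hη]; simp [Complex.mul_re]
    have hηim : ∀ j, (η j).im = t⁻¹ * (ζ j).im := fun j => by
      rw [hη]; simp [Complex.mul_im]
    have hmem : memV d η := by
      refine ⟨?_, ?_, ?_⟩
      · calc ∑ j, (η j).re * (η j).im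
            = ∑ j, t⁻¹ * t⁻¹ * ((ζ j).re * (ζ j).im) := by
              refine Finset.sum_congr rfl fun j _ => ?_
              rw [hηre j, hηim j]; ring
          _ = t⁻¹ * t⁻¹ * ∑ j, (ζ j).re * (ζ j).im := (Finset.mul_sum _ _ _).symm
          _ = 0 := by rw [him, mul_zero]
      · calc ∑ j, (η j).re ^ 2
            = ∑ j, t⁻¹ ^ 2 * (ζ j).re ^ 2 := by
              refine Finset.sum_congr rfl fun j _ => ?_
              rw [hηre j]; ring
          _ = t⁻¹ ^ 2 * S := (Finset.mul_sum _ _ _).symm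
          _ = 1 := by rw [inv_pow, ht2, inv_mul_cancel₀ hS]
      · calc ∑ j, (η j).im ^ 2
            = ∑ j, t⁻¹ ^ 2 * (ζ j).im ^ 2 := by
              refine Finset.sum_congr rfl fun j _ => ?_
              rw [hηim j]; ring
          _ = t⁻¹ ^ 2 * ∑ j, (ζ j).im ^ 2 := (Finset.mul_sum _ _ _).symm
          _ = 1 := by rw [← hx, inv_pow, ht2, inv_mul_cancel₀ hS]
    have hζη : ∀ j, ζ j = ((t : ℝ) : ℂ) * η j := fun j => by
      rw [hη]
      rw [← mul_assoc, Complex.ofReal_inv]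
      rw [mul_inv_cancel₀ (Complex.ofReal_ne_zero.mpr ht), one_mul]
    calc tdot d k A (vpow d k ζ)
        = ∑ α : Fin k → Fin d, A α * (((t : ℝ) : ℂ) ^ k * ∏ i, η (α i)) := by
          rw [tdot]
          refine Finset.sum_congr rfl fun α _ => ?_
          rw [vpow]
          congr 1
          calc (∏ i, ζ (α i)) = ∏ i, (((t : ℝ) : ℂ) * η (α i)) :=
                Finset.prod_congr rfl fun i _ => hζη (α i)
            _ = (((t : ℝ) : ℂ)) ^ k * ∏ i, η (α i) := by
                rw [Finset.prod_mul_distrib, Finset.prod_const, Finset.card_univ,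
                  Fintype.card_fin]
      _ = ((t : ℝ) : ℂ) ^ k * tdot d k A (vpow d k η) := by
          rw [tdot, Finset.mul_sum]
          refine Finset.sum_congr rfl fun α _ => ?_
          rw [vpow]; ring
      _ = 0 := by rw [h η hmem, mul_zero]

end Scaling

section Dvd

lemma sumsq_dvd {n : ℕ} (hn : n ≠ 0) (P : MvPolynomial (Fin (n + 1)) ℂ)
    (hvan : ∀ ζ : Fin (n + 1) → ℂ, (∑ j, ζ j ^ 2) = 0 → MvPolynomial.eval ζ P = 0) :
    (∑ j : Fin (n + 1), (X j : MvPolynomial (Fin (n + 1)) ℂ) ^ 2) ∣ P := by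
  classical
  set c : MvPolynomial (Fin n) ℂ := ∑ j : Fin n, X j ^ 2 with hc
  set q' : Polynomial (MvPolynomial (Fin n) ℂ) := Polynomial.X ^ 2 + Polynomial.C c with hq'
  have hmonic : q'.Monic := Polynomial.monic_X_pow_add
    (lt_of_le_of_lt Polynomial.degree_C_le (by norm_num))
  have hq'deg : q'.degree = 2 := Polynomial.degree_X_pow_add_C (by norm_num) c
  set P' := MvPolynomial.finSuccEquiv ℂ n P with hP'
  set r := P' %ₘ q' with hr
  set Q := P' /ₘ q' with hQ
  have hdiv : r + q' * Q = P' := Polynomial.modByMonic_add_div P' q'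
  have hrd : r.degree ≤ 1 := by
    by_cases h0 : r = 0
    · simp [h0]
    · have h2 := Polynomial.degree_modByMonic_lt P' hmonic
      rw [hq'deg] at h2
      have h3 : r.natDegree < 2 := (Polynomial.natDegree_lt_iff_degree_lt h0).mpr (by
        exact_mod_cast h2)
      have h4 : r.natDegree ≤ 1 := by omega
      have h5 : r.degree ≤ (1 : ℕ) := Polynomial.natDegree_le_iff_degree_le.mp h4
      exact_mod_cast h5
  have hre : r = Polynomial.C (r.coeff 1) * Polynomial.X + Polynomial.C (r.coeff 0) :=
    Polynomial.eq_X_add_C_of_degree_le_one hrd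
  have hceval : ∀ ζ' : Fin n → ℂ, MvPolynomial.eval ζ' c = ∑ j, ζ' j ^ 2 := by
    intro ζ'
    rw [hc, map_sum]
    exact Finset.sum_congr rfl fun j _ => by rw [map_pow, eval_X]
  have hkey : ∀ (ζ' : Fin n → ℂ) (s : ℂ), s ^ 2 + MvPolynomial.eval ζ' c = 0 →
      MvPolynomial.eval ζ' (r.coeff 1) * s + MvPolynomial.eval ζ' (r.coeff 0) = 0 := by
    intro ζ' s hs
    have h0 : (∑ j : Fin (n + 1), ((Fin.cons s ζ' : Fin (n + 1) → ℂ) j) ^ 2) = 0 := by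
      rw [Fin.sum_univ_succ]
      simp only [Fin.cons_zero, Fin.cons_succ]
      rw [hceval ζ'] at hs
      exact hs
    have h1 := hvan _ h0
    rw [MvPolynomial.eval_eq_eval_mv_eval'] at h1
    rw [← hP', ← hdiv, Polynomial.map_add, Polynomial.map_mul, Polynomial.eval_add,
      Polynomial.eval_mul] at h1
    have hq'eval : Polynomial.eval s (Polynomial.map (MvPolynomial.eval ζ') q') = 0 := by
      rw [hq', Polynomial.map_add, Polynomial.map_pow, Polynomial.map_X, Polynomial.map_C,
        Polynomial.eval_add, Polynomial.eval_pow, Polynomial.eval_X, Polynomial.eval_C]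
      exact hs
    rw [hq'eval, zero_mul, add_zero, hre] at h1
    simp only [Polynomial.map_add, Polynomial.map_mul, Polynomial.map_C, Polynomial.map_X,
      Polynomial.eval_add, Polynomial.eval_mul, Polynomial.eval_C, Polynomial.eval_X] at h1
    exact h1
  have hb : r.coeff 0 = 0 := by
    apply MvPolynomial.funext
    intro ζ'
    obtain ⟨s, hs⟩ := IsAlgClosed.exists_pow_nat_eq (-(MvPolynomial.eval ζ' c)) two_pos
    have h1 := hkey ζ' s (by rw [hs]; ring)
    have h2 := hkey ζ' (-s) (by rw [neg_sq, hs]; ring)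
    rw [map_zero]
    linear_combination (h1 + h2) / 2
  have hcne : c ≠ 0 := by
    intro h0
    have h1 := congrArg (MvPolynomial.eval (fun _ : Fin n => (1 : ℂ))) h0
    rw [hceval, map_zero] at h1
    have h2 : ((n : ℂ)) = 0 := by
      rw [← h1]
      rw [Finset.sum_congr rfl (fun j _ => one_pow 2), Finset.sum_const, Finset.card_univ,
        Fintype.card_fin, nsmul_eq_mul, mul_one]
    exact hn (by exact_mod_cast h2)
  have hac : r.coeff 1 * c = 0 := by
    apply MvPolynomial.funext
    intro ζ'
    rw [map_mul, map_zero]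
    by_cases hc0 : MvPolynomial.eval ζ' c = 0
    · rw [hc0, mul_zero]
    · obtain ⟨s, hs⟩ := IsAlgClosed.exists_pow_nat_eq (-(MvPolynomial.eval ζ' c)) two_pos
      have hs0 : s ≠ 0 := by
        intro h0
        rw [h0] at hs
        simp only [ne_eq, zero_pow, OfNat.ofNat_ne_zero, not_false_eq_true] at hs
        exact hc0 (by linear_combination hs)
      have h1 := hkey ζ' s (by rw [hs]; ring)
      have h2 := hkey ζ' (-s) (by rw [neg_sq, hs]; ring)
      have ha0 : MvPolynomial.eval ζ' (r.coeff 1) = 0 := by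
        have hd := sub_eq_zero_of_eq (h1.trans h2.symm)
        have : MvPolynomial.eval ζ' (r.coeff 1) * (2 * s) = 0 := by linear_combination hd
        rcases mul_eq_zero.mp this with h | h
        · exact h
        · exact absurd h (by simp [hs0])
      rw [ha0, zero_mul]
  have ha : r.coeff 1 = 0 := by
    rcases mul_eq_zero.mp hac with h | h
    · exact h
    · exact absurd h hcne
  have hr0 : r = 0 := by rw [hre, ha, hb]; simp
  have hdvd' : q' ∣ P' := ⟨Q, by rw [← hdiv, hr0, zero_add]⟩
  have hqq : MvPolynomial.finSuccEquiv ℂ n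
      (∑ j : Fin (n + 1), (X j : MvPolynomial (Fin (n + 1)) ℂ) ^ 2) = q' := by
    have hXsq : ∀ j : Fin n, MvPolynomial.finSuccEquiv ℂ n
        ((X j.succ : MvPolynomial (Fin (n + 1)) ℂ) ^ 2)
        = Polynomial.C ((X j : MvPolynomial (Fin n) ℂ) ^ 2) := by
      intro j
      rw [map_pow, finSuccEquiv_X_succ, ← Polynomial.C_pow]
    rw [map_sum, Fin.sum_univ_succ, map_pow, finSuccEquiv_X_zero,
      Finset.sum_congr rfl (fun j _ => hXsq j),
      ← map_sum Polynomial.C (fun j : Fin n => (X j : MvPolynomial (Fin n) ℂ) ^ 2) Finset.univ,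
      hq', hc]
  obtain ⟨Q', hQ'⟩ := hdvd'
  refine ⟨(MvPolynomial.finSuccEquiv ℂ n).symm Q', ?_⟩
  have h2 := congrArg (MvPolynomial.finSuccEquiv ℂ n).symm hQ'
  rw [hP', AlgEquiv.symm_apply_apply, map_mul] at h2
  have hqs : (MvPolynomial.finSuccEquiv ℂ n).symm q'
      = ∑ j : Fin (n + 1), (X j : MvPolynomial (Fin (n + 1)) ℂ) ^ 2 := by
    rw [← hqq, AlgEquiv.symm_apply_apply]
  rw [hqs] at h2
  exact h2

end Dvd

/-- a symmetric k-tensor (k ≥ 2, d ≥ 3) with A · ζ^k = 0 for all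
ζ ∈ V has the form A = I₂ ⊗ B with B symmetric of order k - 2. -/
theorem tensor_vanishing_on_V (d k : ℕ) (hk : 2 ≤ k) (hd : 3 ≤ d)
    (A : (Fin k → Fin d) → ℂ) (hA : IsSymTensor d k A)
    (h : ∀ ζ : Fin d → ℂ, memV d ζ → tdot d k A (vpow d k ζ) = 0) :
    ∃ B : (Fin (k - 2) → Fin d) → ℂ, IsSymTensor d (k - 2) B ∧
      A = tcast d (by omega : 2 + (k - 2) = k) (stprod d 2 (k - 2) (I2 d) B) := by
  classical
  obtain ⟨n, rfl⟩ : ∃ n, d = n + 1 := ⟨d - 1, by omega⟩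
  have hvan : ∀ ζ : Fin (n + 1) → ℂ, (∑ j, ζ j ^ 2) = 0 →
      MvPolynomial.eval ζ (toPoly (n + 1) k A) = 0 := by
    intro ζ hζ
    rw [toPoly_eval]
    exact vanish_on_cone (by omega) A h ζ hζ
  obtain ⟨R, hR⟩ := sumsq_dvd (by omega) (toPoly (n + 1) k A) hvan
  have hqhom : (∑ j : Fin (n + 1), (X j : MvPolynomial (Fin (n + 1)) ℂ) ^ 2).IsHomogeneous 2 := by
    refine IsHomogeneous.sum _ _ _ fun j _ => ?_
    simpa using (isHomogeneous_X ℂ j).pow 2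
  have hcomp := eq_mul_homogeneousComponent hk hqhom (toPoly_isHomogeneous A) hR
  obtain ⟨S, hS⟩ := exists_tensor_of_homogeneous (homogeneousComponent (k - 2) R)
    (homogeneousComponent_isHomogeneous _ _)
  refine ⟨symmetrize (n + 1) (k - 2) S, symmetrize_isSym S, ?_⟩
  set RHS := tcast (n + 1) (by omega : 2 + (k - 2) = k)
    (stprod (n + 1) 2 (k - 2) (I2 (n + 1)) (symmetrize (n + 1) (k - 2) S)) with hRHS
  have hRHSsym : IsSymTensor (n + 1) k RHS :=
    isSymTensor_tcast _ (symmetrize_isSym _)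
  have hRHSpoly : toPoly (n + 1) k RHS = toPoly (n + 1) k A := by
    rw [hRHS, toPoly_tcast, toPoly_stprod, toPoly_I2, toPoly_symmetrize, hS, ← hcomp]
  have hdiffsym : IsSymTensor (n + 1) k (fun α => A α - RHS α) := by
    intro π α
    simp only []
    rw [hA π α, hRHSsym π α]
  have hdiffpoly : toPoly (n + 1) k (fun α => A α - RHS α) = 0 := by
    rw [toPoly_sub, hRHSpoly, sub_self]
  have hzero := symTensor_eq_zero_of_toPoly hdiffsym hdiffpoly
  funext α
  exact sub_eq_zero.mp (hzero α)
end
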